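/- Assume the setup below, assume in addition that F is μ_F-strongly convex, and let U = Diag(u) be a diagonal matrix with entries 0 < u^j ≤ 2/L_Ω for all j; put u_max = max_j u^j and u_min = min_j u^j. Fix w_{t-1}, v_{t-1} ∈ ℝ^d and set w_t = prox_R^{U^{-1}}(w_{t-1} − U v_{t-1}). For each b-tuple ι = (i_1,…,i_b) ∈ {1,…,n}^b define v_t(ι) = (1/b)∑_{j=1}^b (∇f_{i_j}(w_t) − ∇f_{i_j}(w_{t-1}))/(q_{i_j} n) + v_{t-1} and w_{t+1}(ι) = prox_R^{U^{-1}}(w_t − U v_t(ι)). Then ∑_{ι ∈ {1,…,n}^b} (∏_{j=1}^b q_{i_j}) · ‖w_{t+1}(ι) − w_t‖_{U^{-1}}² ≤ ( 1 − μ_F² u_min (2/L_Ω − u_max) ) · ‖w_t − w_{t-1}‖_{U^{-1}}². -/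

import Mathlib

open scoped BigOperators RealInnerProductSpace

/-- `ℝ^d` as Euclidean space. -/
abbrev Euc (d : ℕ) := EuclideanSpace ℝ (Fin d)

/-- Action of a `d × d` real matrix on a vector of `ℝ^d`. -/
noncomputable def mdot {d : ℕ} (M : Matrix (Fin d) (Fin d) ℝ) (x : Euc d) : Euc d :=
  Matrix.toEuclideanLin M x

/-- The quadratic form `‖x‖_M² = xᵀ M x` associated with a matrix `M`. -/
noncomputable def qf {d : ℕ} (M : Matrix (Fin d) (Fin d) ℝ) (x : Euc d) : ℝ :=
  ⟪x, mdot M x⟫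

/-- `u` is a point of the scaled proximal operator `prox_R^M (w)`, i.e. a minimizer of
`y ↦ (1/2)‖y - w‖_M² + R y`, for an extended-real-valued `R`. -/
def IsProxE {d : ℕ} (R : Euc d → EReal) (M : Matrix (Fin d) (Fin d) ℝ) (w u : Euc d) : Prop :=
  ∀ y, ((2⁻¹ * qf M (u - w) : ℝ) : EReal) + R u ≤ ((2⁻¹ * qf M (y - w) : ℝ) : EReal) + R y

/-- Convexity of an extended-real-valued function on `ℝ^d`. -/
def ERealConvexOn {d : ℕ} (R : Euc d → EReal) : Prop :=
  ∀ x y : Euc d, ∀ a b : ℝ, 0 ≤ a → 0 ≤ b → a + b = 1 →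
    R (a • x + b • y) ≤ (a : EReal) * R x + (b : EReal) * R y

/-- Properness of an extended-real-valued function: never `-∞`, and finite somewhere. -/
def ERealProper {d : ℕ} (R : Euc d → EReal) : Prop :=
  (∀ x, R x ≠ ⊥) ∧ (∃ x, R x ≠ ⊤)

/-- The average `F = (1/n) ∑ᵢ fᵢ`. -/
noncomputable def Favg {d n : ℕ} (f : Fin n → Euc d → ℝ) (x : Euc d) : ℝ :=
  (n : ℝ)⁻¹ * ∑ i, f i x

/-- The averaged gradient `∇F = (1/n) ∑ᵢ ∇fᵢ`. -/
noncomputable def gAvg {d n : ℕ} (gf : Fin n → Euc d → Euc d) (x : Euc d) : Euc d :=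
  (n : ℝ)⁻¹ • ∑ i, gf i x

section Abstract
set_option maxHeartbeats 1000000
variable {E : Type*} [NormedAddCommGroup E] [InnerProductSpace ℝ E] [CompleteSpace E]

lemma myLineDeriv (f : E → ℝ) (g : E → E) (hg : ∀ x, HasGradientAt f (g x) x)
    (x v : E) (t : ℝ) :
    HasDerivAt (fun s : ℝ => f (x + s • v)) ⟪g (x + t • v), v⟫ t := by
  have hc : HasDerivAt (fun s : ℝ => x + s • v) v t := by
    simpa using ((hasDerivAt_id t).smul_const v).const_add x
  have := ((hg (x + t • v)).hasFDerivAt).comp_hasDerivAt t hc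
  simpa [InnerProductSpace.toDual_apply_apply, Function.comp_def] using this

lemma grad_ineq (f : E → ℝ) (g : E → E) (hg : ∀ x, HasGradientAt f (g x) x)
    (hcf : ConvexOn ℝ Set.univ f) (x y : E) : f x + ⟪g x, y - x⟫ ≤ f y := by
  set h : ℝ → ℝ := fun s => f (x + s • (y - x)) with hh
  have hd : HasDerivAt h ⟪g x, y - x⟫ 0 := by
    simpa using myLineDeriv f g hg x (y - x) 0
  have hslope : Filter.Tendsto (slope h 0) (nhdsWithin 0 (Set.Ioi 0))
      (nhds ⟪g x, y - x⟫) :=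
    (hasDerivAt_iff_tendsto_slope.1 hd).mono_left
      (nhdsWithin_mono 0 (fun t ht => by simpa using ne_of_gt ht))
  have hbound : ∀ᶠ t in nhdsWithin (0:ℝ) (Set.Ioi 0), slope h 0 t ≤ f y - f x := by
    filter_upwards [Ioo_mem_nhdsGT_of_mem (Set.mem_Ico.2 ⟨le_refl (0:ℝ), one_pos⟩)]
      with t ht
    have h1 : h t ≤ (1 - t) * f x + t * f y := by
      have := hcf.2 (Set.mem_univ x) (Set.mem_univ y) (by linarith [ht.2] : (0:ℝ) ≤ 1 - t)
        (le_of_lt ht.1) (by ring)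
      have hxy : (1 - t) • x + t • y = x + t • (y - x) := by module
      simpa [hh, hxy] using this
    have h0 : h 0 = f x := by simp [hh]
    have hs : slope h 0 t = (h t - h 0) / t := by simp [slope_def_field]
    rw [hs, h0, div_le_iff₀ ht.1]
    nlinarith [h1]
  have := le_of_tendsto hslope hbound
  linarith [this]

lemma descent (f : E → ℝ) (g : E → E) (hg : ∀ x, HasGradientAt f (g x) x)
    (L : ℝ) (hL : 0 ≤ L) (hLip : ∀ a b, ‖g a - g b‖ ≤ L * ‖a - b‖) (x y : E) :
    f y ≤ f x + ⟪g x, y - x⟫ + L / 2 * ‖y - x‖ ^ 2 := by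
  set v := y - x with hv
  set h : ℝ → ℝ := fun s => f (x + s • v) with hh
  set h' : ℝ → ℝ := fun s => ⟪g (x + s • v), v⟫ with hh'
  have hd : ∀ t, HasDerivAt h (h' t) t := fun t => myLineDeriv f g hg x v t
  have hgcont : Continuous g := by
    rcases eq_or_lt_of_le hL with hL0 | hL0
    · have hc : ∀ a, g a = g 0 := fun a => by
        have := hLip a 0
        rw [← hL0, zero_mul] at this
        rw [← sub_eq_zero, ← norm_le_zero_iff]
        exact this
      have : g = fun _ => g 0 := funext hc
      rw [this]; exact continuous_const
    · exact (LipschitzWith.of_dist_le_mul (K := ⟨L, hL⟩) fun a b => by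
        rw [dist_eq_norm, dist_eq_norm]; exact hLip a b).continuous
  have hh'cont : Continuous h' := by
    apply Continuous.inner
    · exact hgcont.comp (by continuity)
    · exact continuous_const
  have ftc : ∫ t in (0:ℝ)..1, h' t = h 1 - h 0 :=
    intervalIntegral.integral_eq_sub_of_hasDerivAt (fun t _ => hd t)
      (hh'cont.intervalIntegrable 0 1)
  have hmono : ∫ t in (0:ℝ)..1, h' t ≤ ∫ t in (0:ℝ)..1, (⟪g x, v⟫ + L * ‖v‖^2 * t) := by
    have hcb : Continuous fun t : ℝ => ⟪g x, v⟫ + L * ‖v‖^2 * t := by fun_prop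
    apply intervalIntegral.integral_mono_on zero_le_one (hh'cont.intervalIntegrable 0 1)
      (hcb.intervalIntegrable 0 1)
    intro t ht
    have hsub : h' t - ⟪g x, v⟫ = ⟪g (x + t • v) - g x, v⟫ := by
      rw [inner_sub_left]
    have hb : ⟪g (x + t • v) - g x, v⟫ ≤ L * ‖v‖^2 * t := by
      calc ⟪g (x + t • v) - g x, v⟫ ≤ ‖g (x + t • v) - g x‖ * ‖v‖ := real_inner_le_norm _ _
        _ ≤ (L * ‖x + t • v - x‖) * ‖v‖ := by
            apply mul_le_mul_of_nonneg_right (hLip _ _) (norm_nonneg v)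
        _ = L * ‖v‖^2 * t := by
            rw [show x + t • v - x = t • v by abel, norm_smul, Real.norm_eq_abs,
              abs_of_nonneg ht.1]
            ring
    linarith
  have hint : ∫ t in (0:ℝ)..1, (⟪g x, v⟫ + L * ‖v‖^2 * t) = ⟪g x, v⟫ + L / 2 * ‖v‖^2 := by
    have hcb : Continuous fun t : ℝ => L * ‖v‖^2 * t := by fun_prop
    rw [intervalIntegral.integral_add (intervalIntegrable_const) (hcb.intervalIntegrable 0 1)]
    rw [intervalIntegral.integral_const_mul, integral_id]
    simp
    ring
  have h1 : h 1 = f y := by simp [hh, hv]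
  have h0 : h 0 = f x := by simp [hh]
  rw [ftc, h1, h0] at hmono
  rw [hint] at hmono
  linarith

lemma cocoercive (f : E → ℝ) (g : E → E) (hg : ∀ x, HasGradientAt f (g x) x)
    (hcf : ConvexOn ℝ Set.univ f)
    (L : ℝ) (hL : 0 ≤ L) (hLip : ∀ a b, ‖g a - g b‖ ≤ L * ‖a - b‖) (x y : E) :
    ‖g x - g y‖^2 ≤ L * ⟪g x - g y, x - y⟫ := by
  rcases eq_or_lt_of_le hL with hL0 | hL0
  · have : ‖g x - g y‖ ≤ 0 := by
      have := hLip x y; rw [← hL0, zero_mul] at this; exact this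
    have h0 : g x - g y = 0 := by rwa [← norm_le_zero_iff]
    rw [h0]; simp
  · -- halfway ineq: ∀ a b, f a + ⟪g a, b - a⟫ + 1/(2L) ‖g b - g a‖² ≤ f b
    have key : ∀ a b : E, f a + ⟪g a, b - a⟫ + 1/(2*L) * ‖g b - g a‖^2 ≤ f b := by
      intro a b
      set z := b - (1/L) • (g b - g a) with hz
      have h1 : f a + ⟪g a, z - a⟫ ≤ f z := grad_ineq f g hg hcf a z
      have h2 : f z ≤ f b + ⟪g b, z - b⟫ + L / 2 * ‖z - b‖^2 := descent f g hg L hL hLip b z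
      set w := g b - g a with hw
      have hzb : z - b = -((1/L) • w) := by rw [hz]; abel
      have hza : z - a = (b - a) - (1/L) • w := by rw [hz]; abel
      have e1 : ⟪g a, z - a⟫ = ⟪g a, b - a⟫ - (1/L) * ⟪g a, w⟫ := by
        rw [hza, inner_sub_right, real_inner_smul_right]
      have e2 : ⟪g b, z - b⟫ = -((1/L) * ⟪g b, w⟫) := by
        rw [hzb, inner_neg_right, real_inner_smul_right]
      have e3 : ‖z - b‖^2 = (1/L)^2 * ‖w‖^2 := by
        rw [hzb, norm_neg, norm_smul, Real.norm_eq_abs, mul_pow, sq_abs]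
      have e4 : ⟪g b, w⟫ - ⟪g a, w⟫ = ‖w‖^2 := by
        rw [← inner_sub_left, ← hw, real_inner_self_eq_norm_sq]
      have hL' : L ≠ 0 := ne_of_gt hL0
      rw [e1] at h1
      rw [e2, e3] at h2
      have c1 : L/2 * ((1/L)^2 * ‖w‖^2) = 1/(2*L) * ‖w‖^2 := by
        field_simp
      have c2 : 1/L * ⟪g b, w⟫ - 1/L * ⟪g a, w⟫ = 1/L * ‖w‖^2 := by
        rw [← mul_sub, e4]
      have c3 : 1/L * ‖w‖^2 = 2 * (1/(2*L) * ‖w‖^2) := by field_simp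
      rw [c1] at h2
      linarith [h1, h2]
    have k1 := key x y
    have k2 := key y x
    have : 1/L * ‖g x - g y‖^2 ≤ ⟪g x - g y, x - y⟫ := by
      have e1 : ⟪g x, y - x⟫ + ⟪g y, x - y⟫ = -⟪g x - g y, x - y⟫ := by
        rw [inner_sub_left, show (y - x : E) = -(x - y) by abel, inner_neg_right]
        ring
      have e2 : ‖g y - g x‖ = ‖g x - g y‖ := norm_sub_rev _ _
      rw [e2] at k1
      have c : 1/L * ‖g x - g y‖^2 = 2*(1/(2*L) * ‖g x - g y‖^2) := by field_simp
      linarith [k1, k2, e1, c]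
    calc ‖g x - g y‖^2 = L * (1/L * ‖g x - g y‖^2) := by field_simp
      _ ≤ L * ⟪g x - g y, x - y⟫ := mul_le_mul_of_nonneg_left this hL

lemma jensen_sq {ι : Type*} (s : Finset ι) (p : ι → ℝ) (hp : ∀ i ∈ s, 0 ≤ p i)
    (hps : ∑ i ∈ s, p i = 1) (x : ι → E) :
    ‖∑ i ∈ s, p i • x i‖^2 ≤ ∑ i ∈ s, p i * ‖x i‖^2 := by
  set G := ∑ i ∈ s, p i • x i with hG
  have hinner : ∑ i ∈ s, p i * ⟪x i, G⟫ = ‖G‖^2 := by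
    rw [← real_inner_self_eq_norm_sq, hG, sum_inner]
    exact Finset.sum_congr rfl fun i _ => (real_inner_smul_left _ _ _).symm
  have key : ∑ i ∈ s, p i * ‖x i - G‖^2
      = ∑ i ∈ s, p i * ‖x i‖^2 - ‖G‖^2 := by
    have expand : ∀ i ∈ s, p i * ‖x i - G‖^2
        = p i * ‖x i‖^2 - 2 * (p i * ⟪x i, G⟫) + p i * ‖G‖^2 := fun i _ => by
      rw [norm_sub_sq_real]; ring
    rw [Finset.sum_congr rfl expand]
    rw [Finset.sum_add_distrib, Finset.sum_sub_distrib, ← Finset.mul_sum, ← Finset.sum_mul,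
      hinner, hps]
    ring
  have hnn : 0 ≤ ∑ i ∈ s, p i * ‖x i - G‖^2 :=
    Finset.sum_nonneg fun i hi => mul_nonneg (hp i hi) (sq_nonneg _)
  linarith [key, hnn]

lemma prox_step_ineq
    (R : E → EReal)
    (hconv : ∀ x y : E, ∀ a b : ℝ, 0 ≤ a → 0 ≤ b → a + b = 1 →
      R (a • x + b • y) ≤ (a : EReal) * R x + (b : EReal) * R y)
    (A P P' : E) (rP rP' : ℝ) (hRP : R P = (rP : EReal)) (hRP' : R P' = (rP' : EReal))
    (hP : ∀ y, ((2⁻¹ * ‖P - A‖^2 : ℝ) : EReal) + R P ≤ ((2⁻¹ * ‖y - A‖^2 : ℝ) : EReal) + R y) :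
    rP - rP' ≤ ⟪P - A, P' - P⟫ := by
  set v := P - A with hv
  set w := P' - P with hw
  have key : ∀ s : ℝ, 0 < s → s ≤ 1 → rP - rP' ≤ ⟪v, w⟫ + s/2 * ‖w‖^2 := by
    intro s hs hs1
    set y := (1 - s) • P + s • P' with hy
    have hcv : R y ≤ (((1 - s) * rP + s * rP' : ℝ) : EReal) := by
      have := hconv P P' (1 - s) s (by linarith) (le_of_lt hs) (by ring)
      rw [hRP, hRP', ← EReal.coe_mul, ← EReal.coe_mul, ← EReal.coe_add] at this
      exact this
    have hchain : ((2⁻¹ * ‖P - A‖^2 + rP : ℝ) : EReal)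
        ≤ ((2⁻¹ * ‖y - A‖^2 + ((1 - s) * rP + s * rP') : ℝ) : EReal) := by
      rw [EReal.coe_add, EReal.coe_add, ← hRP]
      exact le_trans (hP y) (add_le_add_right hcv _)
    have hreal : 2⁻¹ * ‖P - A‖^2 + rP ≤ 2⁻¹ * ‖y - A‖^2 + ((1 - s) * rP + s * rP') :=
      EReal.coe_le_coe_iff.1 hchain
    have hyA : y - A = v + s • w := by rw [hy, hv, hw]; module
    have hnorm : ‖y - A‖^2 = ‖v‖^2 + 2 * (s * ⟪v, w⟫) + s^2 * ‖w‖^2 := by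
      rw [hyA, norm_add_sq_real, real_inner_smul_right, norm_smul, Real.norm_eq_abs,
        mul_pow, sq_abs]
    rw [hnorm] at hreal
    have h2 : s * (rP - rP') ≤ s * (⟪v, w⟫ + s/2 * ‖w‖^2) := by nlinarith
    exact le_of_mul_le_mul_left h2 hs
  refine le_of_forall_pos_le_add fun ε hε => ?_
  set W := ‖w‖^2 with hW
  have hWnn : 0 ≤ W := sq_nonneg _
  set s := min 1 (ε / (W + 1)) with hsdef
  have hs0 : 0 < s := lt_min one_pos (div_pos hε (by linarith))
  have hs1 : s ≤ 1 := min_le_left _ _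
  have hs2 : s ≤ ε / (W + 1) := min_le_right _ _
  have hb : s/2 * W ≤ ε := by
    have h3 : s * W ≤ (ε / (W + 1)) * W := mul_le_mul_of_nonneg_right hs2 hWnn
    have h4 : (ε / (W + 1)) * W ≤ ε := by
      rw [div_mul_eq_mul_div, div_le_iff₀ (by linarith : (0:ℝ) < W + 1)]
      nlinarith
    nlinarith
  linarith [key s hs0 hs1]

lemma prox_contract
    (R : E → EReal)
    (hconv : ∀ x y : E, ∀ a b : ℝ, 0 ≤ a → 0 ≤ b → a + b = 1 →
      R (a • x + b • y) ≤ (a : EReal) * R x + (b : EReal) * R y)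
    (hbot : ∀ x, R x ≠ ⊥) (x0 : E) (hx0 : R x0 ≠ ⊤)
    (A B P P' : E)
    (hP : ∀ y, ((2⁻¹ * ‖P - A‖^2 : ℝ) : EReal) + R P ≤ ((2⁻¹ * ‖y - A‖^2 : ℝ) : EReal) + R y)
    (hP' : ∀ y, ((2⁻¹ * ‖P' - B‖^2 : ℝ) : EReal) + R P' ≤ ((2⁻¹ * ‖y - B‖^2 : ℝ) : EReal) + R y) :
    ‖P' - P‖^2 ≤ ‖B - A‖^2 := by
  have hfin : ∀ (C Q : E), (∀ y, ((2⁻¹ * ‖Q - C‖^2 : ℝ) : EReal) + R Q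
      ≤ ((2⁻¹ * ‖y - C‖^2 : ℝ) : EReal) + R y) → R Q ≠ ⊤ := by
    intro C Q hQ htop
    have := hQ x0
    rw [htop] at this
    have hLHS : ((2⁻¹ * ‖Q - C‖^2 : ℝ) : EReal) + ⊤ = ⊤ := by
      rw [EReal.add_top_iff_ne_bot]; exact EReal.coe_ne_bot _
    rw [hLHS, top_le_iff] at this
    have hrx0 : R x0 = (((R x0).toReal : ℝ) : EReal) := (EReal.coe_toReal hx0 (hbot x0)).symm
    rw [hrx0, ← EReal.coe_add] at this
    exact EReal.coe_ne_top _ this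
  have hPfin := hfin A P hP
  have hP'fin := hfin B P' hP'
  have hRP : R P = (((R P).toReal : ℝ) : EReal) := (EReal.coe_toReal hPfin (hbot P)).symm
  have hRP' : R P' = (((R P').toReal : ℝ) : EReal) := (EReal.coe_toReal hP'fin (hbot P')).symm
  have s1 := prox_step_ineq R hconv A P P' _ _ hRP hRP' hP
  have s2 := prox_step_ineq R hconv B P' P _ _ hRP' hRP hP'
  have hsum : 0 ≤ ⟪P - A, P' - P⟫ + ⟪P' - B, P - P'⟫ := by linarith
  have e1 : ⟪P' - B, P - P'⟫ = -⟪P' - B, P' - P⟫ := by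
    rw [show (P - P' : E) = -(P' - P) by abel, inner_neg_right]
  have e2 : ⟪P - A, P' - P⟫ - ⟪P' - B, P' - P⟫ = ⟪B - A, P' - P⟫ - ‖P' - P‖^2 := by
    rw [← inner_sub_left, show (P - A - (P' - B) : E) = (B - A) - (P' - P) by abel,
      inner_sub_left, real_inner_self_eq_norm_sq]
  have hkey : ‖P' - P‖^2 ≤ ⟪B - A, P' - P⟫ := by
    rw [e1] at hsum; linarith [hsum, e2]
  have hcs : ⟪B - A, P' - P⟫ ≤ ‖B - A‖ * ‖P' - P‖ := real_inner_le_norm _ _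
  nlinarith [norm_nonneg (P' - P), norm_nonneg (B - A), sq_nonneg (‖B - A‖ - ‖P' - P‖)]

end Abstract

noncomputable def scl {d : ℕ} (c : Fin d → ℝ) : Euc d →ₗ[ℝ] Euc d where
  toFun x := WithLp.toLp 2 (fun j => c j * x j)
  map_add' x y := PiLp.ext fun j => by simp [mul_add]
  map_smul' s x := PiLp.ext fun j => by simp [smul_eq_mul]; ring

lemma scl_apply {d : ℕ} (c : Fin d → ℝ) (x : Euc d) (j : Fin d) : scl c x j = c j * x j := rfl

lemma norm_sq_euc {d : ℕ} (x : Euc d) : ‖x‖^2 = ∑ j, (x j)^2 := by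
  rw [← real_inner_self_eq_norm_sq, PiLp.inner_apply]
  simp [RCLike.inner_apply, sq]

lemma mdot_diag {d : ℕ} (v : Fin d → ℝ) (x : Euc d) (j : Fin d) :
    mdot (Matrix.diagonal v) x j = v j * x j := by
  simp [mdot, Matrix.toEuclideanLin_apply, Matrix.mulVec_diagonal]

lemma qf_diag {d : ℕ} (v : Fin d → ℝ) (x : Euc d) :
    qf (Matrix.diagonal v) x = ∑ j, v j * (x j)^2 := by
  simp only [qf, PiLp.inner_apply, RCLike.inner_apply]
  refine Finset.sum_congr rfl fun j _ => ?_
  rw [mdot_diag]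
  simp [sq]
  ring

lemma diag_inv {d : ℕ} (u : Fin d → ℝ) (hu : ∀ j, u j ≠ 0) :
    (Matrix.diagonal u)⁻¹ = Matrix.diagonal (fun j => (u j)⁻¹) := by
  apply Matrix.inv_eq_left_inv
  rw [Matrix.diagonal_mul_diagonal]
  convert Matrix.diagonal_one with j
  exact inv_mul_cancel₀ (hu j)

lemma qf_diag_norm {d : ℕ} (v : Fin d → ℝ) (hv : ∀ j, 0 ≤ v j) (x : Euc d) :
    qf (Matrix.diagonal v) x = ‖scl (fun j => Real.sqrt (v j)) x‖^2 := by
  rw [qf_diag, norm_sq_euc]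
  refine Finset.sum_congr rfl fun j _ => ?_
  rw [scl_apply, mul_pow, Real.sq_sqrt (hv j)]

lemma pi_expectation {n b : ℕ} (g : Fin b → Fin n → ℝ) :
    ∑ ι : Fin b → Fin n, ∏ k, g k (ι k) = ∏ k, ∑ i, g k i := by
  rw [Finset.prod_univ_sum, Fintype.piFinset_univ]

lemma marginal_sum {n b : ℕ} (q : Fin n → ℝ) (hqs : ∑ i, q i = 1)
    (j : Fin b) (h : Fin n → ℝ) :
    ∑ ι : Fin b → Fin n, (∏ k, q (ι k)) * h (ι j) = ∑ i, q i * h i := by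
  set g : Fin b → Fin n → ℝ := fun k i => if k = j then q i * h i else q i with hg
  have key : ∀ ι : Fin b → Fin n, (∏ k, q (ι k)) * h (ι j) = ∏ k, g k (ι k) := by
    intro ι
    have l1 : (∏ k, q (ι k)) = q (ι j) * ∏ k ∈ Finset.univ.erase j, q (ι k) :=
      (Finset.mul_prod_erase Finset.univ (fun k => q (ι k)) (Finset.mem_univ j)).symm
    have l2 : (∏ k, g k (ι k)) = g j (ι j) * ∏ k ∈ Finset.univ.erase j, g k (ι k) :=
      (Finset.mul_prod_erase Finset.univ (fun k => g k (ι k)) (Finset.mem_univ j)).symm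
    have l3 : ∏ k ∈ Finset.univ.erase j, g k (ι k) = ∏ k ∈ Finset.univ.erase j, q (ι k) :=
      Finset.prod_congr rfl fun k hk => by
        simp only [hg, if_neg (Finset.mem_erase.1 hk).1]
    rw [l1, l2, l3]
    simp only [hg, if_pos rfl]
    ring
  rw [Finset.sum_congr rfl fun ι _ => key ι, pi_expectation]
  have l4 : ∀ k : Fin b, ∑ i, g k i = if k = j then ∑ i, q i * h i else 1 := by
    intro k
    by_cases hk : k = j <;> simp [hg, hk, hqs]
  rw [Finset.prod_congr rfl fun k _ => l4 k]
  rw [Finset.prod_ite_eq' Finset.univ j (fun _ => ∑ i, q i * h i)]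
  simp

lemma total_mass {n b : ℕ} (q : Fin n → ℝ) (hqs : ∑ i, q i = 1) :
    ∑ ι : Fin b → Fin n, (∏ k, q (ι k)) = 1 := by
  rw [pi_expectation (fun _ i => q i), hqs]  -- may need defeq
  simp

set_option maxHeartbeats 2000000 in
/-- as in Statement 7, with in addition `F` being `μ_F`-strongly convex and
`U = Diag(u)` diagonal with entries `0 < uʲ ≤ 2/L_Ω`; with `u_max = max_j uʲ`,
`u_min = min_j uʲ`, the expected squared step contracts:
`E_ι ‖w_{t+1}(ι) − w_t‖_{U⁻¹}² ≤ (1 − μ_F² u_min (2/L_Ω − u_max)) ‖w_t − w_{t−1}‖_{U⁻¹}²`. -/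
theorem prox_recursive_step_linear_contraction {d n b : ℕ} (hn : 0 < n) (hb : 1 ≤ b) (hbn : b ≤ n)
    (f : Fin n → Euc d → ℝ) (gf : Fin n → Euc d → Euc d)
    (hgrad : ∀ i x, HasGradientAt (f i) (gf i x) x)
    (hconvf : ∀ i, ConvexOn ℝ Set.univ (f i))
    (L : Fin n → ℝ) (hLip : ∀ i x y, ‖gf i x - gf i y‖ ≤ L i * ‖x - y‖)
    (q : Fin n → ℝ) (hq : ∀ i, 0 < q i) (hqs : ∑ i, q i = 1)
    (LΩ : ℝ) (hLΩ : IsGreatest (Set.range fun i => L i / ((n : ℝ) * q i)) LΩ)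
    (R : Euc d → EReal) (hproper : ERealProper R) (hlsc : LowerSemicontinuous R)
    (hconvR : ERealConvexOn R)
    (μF : ℝ) (hμF : 0 < μF)
    (hsc : ∀ x y : Euc d,
      Favg f x + ⟪gAvg gf x, y - x⟫ + μF / 2 * ‖y - x‖ ^ 2 ≤ Favg f y)
    (u : Fin d → ℝ) (hu : ∀ j, 0 < u j ∧ u j ≤ 2 / LΩ)
    (umax umin : ℝ) (humax : IsGreatest (Set.range u) umax) (humin : IsLeast (Set.range u) umin)
    (wprev vprev wt : Euc d)
    (hwt : IsProxE R (Matrix.diagonal u)⁻¹ (wprev - mdot (Matrix.diagonal u) vprev) wt)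
    (wnext : (Fin b → Fin n) → Euc d)
    (hwnext : ∀ ι : Fin b → Fin n, IsProxE R (Matrix.diagonal u)⁻¹
      (wt - mdot (Matrix.diagonal u) ((b : ℝ)⁻¹ •
        ∑ j : Fin b, (q (ι j) * (n : ℝ))⁻¹ • (gf (ι j) wt - gf (ι j) wprev) + vprev))
      (wnext ι)) :
    ∑ ι : Fin b → Fin n, (∏ j : Fin b, q (ι j)) * qf (Matrix.diagonal u)⁻¹ (wnext ι - wt)
      ≤ (1 - μF ^ 2 * umin * (2 / LΩ - umax)) * qf (Matrix.diagonal u)⁻¹ (wt - wprev) := by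
  classical
  rcases Nat.eq_zero_or_pos d with hd0 | hd
  · subst hd0
    have hz : ∀ (M : Matrix (Fin 0) (Fin 0) ℝ) (x : Euc 0), qf M x = 0 := by
      intro M x; simp [qf, PiLp.inner_apply]
    simp [hz]
  obtain ⟨j0⟩ : Nonempty (Fin d) := ⟨⟨0, hd⟩⟩
  have hbpos : (0:ℝ) < (b:ℝ) := by exact_mod_cast hb
  have hnpos : (0:ℝ) < (n:ℝ) := by exact_mod_cast hn
  have huj : ∀ j, 0 < u j := fun j => (hu j).1
  have hune : ∀ j, u j ≠ 0 := fun j => ne_of_gt (huj j)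
  have hLΩpos : 0 < LΩ := by
    have h2 : 0 < 2 / LΩ := lt_of_lt_of_le (huj j0) (hu j0).2
    by_contra h; push_neg at h
    have : 2 / LΩ ≤ 0 := div_nonpos_of_nonneg_of_nonpos (by norm_num) h
    linarith
  have hLle : ∀ i, L i / ((n:ℝ) * q i) ≤ LΩ := fun i => hLΩ.2 (Set.mem_range_self i)
  have hLnn : ∀ i, 0 ≤ L i := by
    intro i
    have h1 := hLip i 0 (EuclideanSpace.single j0 1)
    have h2 : ‖(0 : Euc d) - EuclideanSpace.single j0 (1:ℝ)‖ = 1 := by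
      rw [zero_sub, norm_neg, EuclideanSpace.norm_single, norm_one]
    rw [h2, mul_one] at h1
    exact le_trans (norm_nonneg _) h1
  have huminpos : 0 < umin := by
    obtain ⟨j, hj⟩ := humin.1; rw [← hj]; exact huj j
  have huminle : ∀ j, umin ≤ u j := fun j => humin.2 (Set.mem_range_self j)
  have humaxge : ∀ j, u j ≤ umax := fun j => humax.2 (Set.mem_range_self j)
  have humaxle : umax ≤ 2 / LΩ := by
    obtain ⟨j, hj⟩ := humax.1; rw [← hj]; exact (hu j).2
  set σ : Fin d → ℝ := fun j => Real.sqrt ((u j)⁻¹) with hσ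
  set τ : Fin d → ℝ := fun j => Real.sqrt (u j) with hτ
  have hUinv : (Matrix.diagonal u)⁻¹ = Matrix.diagonal (fun j => (u j)⁻¹) := diag_inv u hune
  have hqfI : ∀ x : Euc d, qf (Matrix.diagonal u)⁻¹ x = ‖scl σ x‖^2 := fun x => by
    rw [hUinv, qf_diag_norm _ (fun j => inv_nonneg.2 (le_of_lt (huj j)))]
  have hqfU : ∀ x : Euc d, qf (Matrix.diagonal u) x = ‖scl τ x‖^2 := fun x => by
    rw [qf_diag_norm _ fun j => le_of_lt (huj j)]
  have hinvτσ : ∀ x : Euc d, scl τ (scl σ x) = x := by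
    intro x; ext j
    show τ j * (σ j * x j) = x j
    rw [hτ, hσ, ← mul_assoc, ← Real.sqrt_mul (le_of_lt (huj j)),
      mul_inv_cancel₀ (hune j), Real.sqrt_one, one_mul]
  have hinvστ : ∀ x : Euc d, scl σ (scl τ x) = x := by
    intro x; ext j
    show σ j * (τ j * x j) = x j
    rw [hτ, hσ, ← mul_assoc, ← Real.sqrt_mul (inv_nonneg.2 (le_of_lt (huj j))),
      inv_mul_cancel₀ (hune j), Real.sqrt_one, one_mul]
  set R' : Euc d → EReal := fun Y => R (scl τ Y) with hR'
  have hconv' : ∀ X Y : Euc d, ∀ a b' : ℝ, 0 ≤ a → 0 ≤ b' → a + b' = 1 →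
      R' (a • X + b' • Y) ≤ (a : EReal) * R' X + (b' : EReal) * R' Y := by
    intro X Y a b' ha hb' hab
    have := hconvR (scl τ X) (scl τ Y) a b' ha hb' hab
    simpa [hR', map_add, map_smul] using this
  have hbot' : ∀ x, R' x ≠ ⊥ := fun x => hproper.1 _
  obtain ⟨x0, hx0⟩ := hproper.2
  have hx0' : R' (scl σ x0) ≠ ⊤ := by
    rw [hR']; show R (scl τ (scl σ x0)) ≠ ⊤
    rw [hinvτσ]; exact hx0
  have hprox_transfer : ∀ (w p : Euc d), IsProxE R (Matrix.diagonal u)⁻¹ w p →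
      ∀ y : Euc d, ((2⁻¹ * ‖scl σ p - scl σ w‖^2 : ℝ) : EReal) + R' (scl σ p)
        ≤ ((2⁻¹ * ‖y - scl σ w‖^2 : ℝ) : EReal) + R' y := by
    intro w p hp y
    have h0 := hp (scl τ y)
    have e1 : ‖scl σ p - scl σ w‖^2 = qf (Matrix.diagonal u)⁻¹ (p - w) := by
      rw [hqfI, map_sub]
    have e2 : ‖y - scl σ w‖^2 = qf (Matrix.diagonal u)⁻¹ (scl τ y - w) := by
      rw [hqfI, map_sub, hinvστ]
    have e3 : R' (scl σ p) = R p := by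
      rw [hR']; show R (scl τ (scl σ p)) = R p; rw [hinvτσ]
    rw [e1, e2, e3]
    exact h0
  set δ : Euc d := wt - wprev with hδ
  set c : Fin n → Euc d := fun i => (q i * (n:ℝ))⁻¹ • (gf i wt - gf i wprev) with hc
  set Δ : (Fin b → Fin n) → Euc d := fun ι => (b:ℝ)⁻¹ • ∑ j, c (ι j) with hΔ
  have hcontract : ∀ ι, qf (Matrix.diagonal u)⁻¹ (wnext ι - wt)
      ≤ qf (Matrix.diagonal u)⁻¹ (δ - mdot (Matrix.diagonal u) (Δ ι)) := by
    intro ι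
    have hPw := hprox_transfer _ _ hwt
    have hPn := hprox_transfer _ _ (hwnext ι)
    have key := prox_contract R' hconv' hbot' (scl σ x0) hx0'
      (scl σ (wprev - mdot (Matrix.diagonal u) vprev))
      (scl σ (wt - mdot (Matrix.diagonal u) (Δ ι + vprev)))
      (scl σ wt) (scl σ (wnext ι)) hPw hPn
    rw [← map_sub, ← map_sub, ← hqfI, ← hqfI] at key
    have hB : (wt - mdot (Matrix.diagonal u) (Δ ι + vprev)) - (wprev - mdot (Matrix.diagonal u) vprev)
        = δ - mdot (Matrix.diagonal u) (Δ ι) := by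
      have hma : mdot (Matrix.diagonal u) (Δ ι + vprev)
          = mdot (Matrix.diagonal u) (Δ ι) + mdot (Matrix.diagonal u) vprev := by
        simp [mdot, map_add]
      rw [hma, hδ]; abel
    rwa [hB] at key
  have hexpand : ∀ z : Euc d, qf (Matrix.diagonal u)⁻¹ (δ - mdot (Matrix.diagonal u) z)
      = qf (Matrix.diagonal u)⁻¹ δ - 2 * ⟪δ, z⟫ + qf (Matrix.diagonal u) z := by
    intro z
    rw [hUinv, qf_diag, qf_diag, qf_diag, PiLp.inner_apply]
    simp only [RCLike.inner_apply, starRingEnd_apply, star_trivial]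
    rw [Finset.mul_sum, ← Finset.sum_sub_distrib, ← Finset.sum_add_distrib]
    refine Finset.sum_congr rfl fun j _ => ?_
    have hzj : (δ - mdot (Matrix.diagonal u) z) j = δ j - u j * z j := by
      simp [mdot_diag]
    rw [hzj]
    field_simp [hune j]
    ring
  -- Jensen over the batch
  have hΔsum : ∀ ι, scl τ (Δ ι) = ∑ j, (b:ℝ)⁻¹ • scl τ (c (ι j)) := by
    intro ι
    rw [hΔ]
    simp only [map_smul, map_sum]
    rw [Finset.smul_sum]
  have hbatch : ∀ ι, qf (Matrix.diagonal u) (Δ ι)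
      ≤ (b:ℝ)⁻¹ * ∑ j, qf (Matrix.diagonal u) (c (ι j)) := by
    intro ι
    have hj := jensen_sq (Finset.univ : Finset (Fin b)) (fun _ => (b:ℝ)⁻¹)
      (fun i _ => by positivity)
      (by rw [Finset.sum_const, Finset.card_univ, Fintype.card_fin, nsmul_eq_mul]
          field_simp) (fun j => scl τ (c (ι j)))
    rw [hqfU, hΔsum ι]
    refine le_trans hj ?_
    rw [Finset.mul_sum]
    exact le_of_eq (Finset.sum_congr rfl fun j _ => by rw [hqfU])
  have hipΔ : ∀ ι, ⟪δ, Δ ι⟫ = (b:ℝ)⁻¹ * ∑ j, ⟪δ, c (ι j)⟫ := by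
    intro ι
    rw [hΔ, real_inner_smul_right, inner_sum]
  set hfun : Fin n → ℝ := fun i => qf (Matrix.diagonal u) (c i) - 2 * ⟪δ, c i⟫ with hhfun
  have hper : ∀ ι, qf (Matrix.diagonal u)⁻¹ (wnext ι - wt)
      ≤ qf (Matrix.diagonal u)⁻¹ δ + (b:ℝ)⁻¹ * ∑ j, hfun (ι j) := by
    intro ι
    refine le_trans (hcontract ι) ?_
    rw [hexpand (Δ ι), hipΔ ι]
    have hbb := hbatch ι
    have hsplit : ∑ j, hfun (ι j)
        = ∑ j, qf (Matrix.diagonal u) (c (ι j)) - 2 * ∑ j, ⟪δ, c (ι j)⟫ := by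
      rw [hhfun, Finset.sum_sub_distrib, Finset.mul_sum]
    rw [hsplit, mul_sub]
    ring_nf
    ring_nf at hbb
    linarith [hbb]
  -- expectation of the bound
  have hsum1 : ∑ ι : Fin b → Fin n, (∏ k, q (ι k))
        * (qf (Matrix.diagonal u)⁻¹ δ + (b:ℝ)⁻¹ * ∑ j, hfun (ι j))
      = qf (Matrix.diagonal u)⁻¹ δ + ∑ i, q i * hfun i := by
    have e0 : ∀ ι : Fin b → Fin n, (∏ k, q (ι k))
          * (qf (Matrix.diagonal u)⁻¹ δ + (b:ℝ)⁻¹ * ∑ j, hfun (ι j))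
        = (∏ k, q (ι k)) * qf (Matrix.diagonal u)⁻¹ δ
          + (b:ℝ)⁻¹ * ∑ j, (∏ k, q (ι k)) * hfun (ι j) := by
      intro ι
      have e1 : ∑ j, (∏ k, q (ι k)) * hfun (ι j)
          = (∏ k, q (ι k)) * ∑ j, hfun (ι j) := (Finset.mul_sum _ _ _).symm
      rw [e1]; ring
    rw [Finset.sum_congr rfl fun ι _ => e0 ι, Finset.sum_add_distrib,
      ← Finset.sum_mul, total_mass q hqs, one_mul, ← Finset.mul_sum, Finset.sum_comm,
      Finset.sum_congr rfl fun j (_ : j ∈ Finset.univ) => marginal_sum q hqs j hfun,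
      Finset.sum_const, Finset.card_univ, Fintype.card_fin, nsmul_eq_mul, ← mul_assoc,
      inv_mul_cancel₀ (ne_of_gt hbpos), one_mul]
  -- per-component quantities
  set T : Fin n → ℝ := fun i => ⟪gf i wt - gf i wprev, δ⟫ with hTdef
  set γ : ℝ := (n:ℝ)⁻¹ * ∑ i, T i with hγ
  have hcoco : ∀ i, ‖gf i wt - gf i wprev‖^2 ≤ L i * T i := fun i =>
    cocoercive (f i) (gf i) (hgrad i) (hconvf i) (L i) (hLnn i)
      (fun a b' => hLip i a b') wt wprev
  have hTnn : ∀ i, 0 ≤ T i := by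
    intro i
    rcases (hLnn i).eq_or_lt with h | h
    · have h1 := hcoco i
      rw [← h, zero_mul] at h1
      have h2 : gf i wt - gf i wprev = 0 := by
        rw [← norm_le_zero_iff]
        nlinarith [norm_nonneg (gf i wt - gf i wprev)]
      rw [hTdef]
      simp [h2]
    · nlinarith [hcoco i, sq_nonneg ‖gf i wt - gf i wprev‖]
  have hip_i : ∀ i, q i * ⟪δ, c i⟫ = (n:ℝ)⁻¹ * T i := by
    intro i
    rw [hc, real_inner_smul_right, hTdef, real_inner_comm, ← mul_assoc, mul_inv,
      ← mul_assoc, mul_inv_cancel₀ (ne_of_gt (hq i)), one_mul]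
  have hsum_ip : ∑ i, q i * ⟪δ, c i⟫ = γ := by
    rw [hγ, Finset.mul_sum]
    exact Finset.sum_congr rfl fun i _ => hip_i i
  have hγnn : 0 ≤ γ := by
    rw [hγ]
    exact mul_nonneg (by positivity) (Finset.sum_nonneg fun i _ => hTnn i)
  -- key bound on weighted second moments
  have hnormc : ∀ i, ‖c i‖^2 = ((q i * (n:ℝ))⁻¹)^2 * ‖gf i wt - gf i wprev‖^2 := by
    intro i
    rw [hc, norm_smul, Real.norm_eq_abs, mul_pow, sq_abs]
  have hK : ∀ i, q i * ‖c i‖^2 ≤ LΩ * ((n:ℝ)⁻¹ * T i) := by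
    intro i
    rw [hnormc i]
    have h1 : q i * ((q i * (n:ℝ))⁻¹)^2 * ‖gf i wt - gf i wprev‖^2
        ≤ q i * ((q i * (n:ℝ))⁻¹)^2 * (L i * T i) := by
      apply mul_le_mul_of_nonneg_left (hcoco i)
      exact mul_nonneg (le_of_lt (hq i)) (sq_nonneg _)
    have h2 : q i * ((q i * (n:ℝ))⁻¹)^2 * (L i * T i)
        = (L i / ((n:ℝ) * q i)) * ((n:ℝ)⁻¹ * T i) := by
      field_simp [ne_of_gt (hq i), ne_of_gt hnpos]
    have h3 : (L i / ((n:ℝ) * q i)) * ((n:ℝ)⁻¹ * T i) ≤ LΩ * ((n:ℝ)⁻¹ * T i) := by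
      apply mul_le_mul_of_nonneg_right (hLle i)
      exact mul_nonneg (by positivity) (hTnn i)
    calc q i * (((q i * (n:ℝ))⁻¹)^2 * ‖gf i wt - gf i wprev‖^2)
        = q i * ((q i * (n:ℝ))⁻¹)^2 * ‖gf i wt - gf i wprev‖^2 := by ring
      _ ≤ q i * ((q i * (n:ℝ))⁻¹)^2 * (L i * T i) := h1
      _ = (L i / ((n:ℝ) * q i)) * ((n:ℝ)⁻¹ * T i) := h2
      _ ≤ LΩ * ((n:ℝ)⁻¹ * T i) := h3
  have hKsum : ∑ i, q i * ‖c i‖^2 ≤ LΩ * γ := by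
    rw [hγ, ← mul_assoc, mul_comm LΩ ((n:ℝ)⁻¹)]
    calc ∑ i, q i * ‖c i‖^2 ≤ ∑ i, LΩ * ((n:ℝ)⁻¹ * T i) :=
          Finset.sum_le_sum fun i _ => hK i
      _ = (n:ℝ)⁻¹ * LΩ * ∑ i, T i := by rw [← Finset.mul_sum, ← Finset.mul_sum]; ring
  have hqfUle : ∀ x : Euc d, qf (Matrix.diagonal u) x ≤ umax * ‖x‖^2 := by
    intro x
    rw [qf_diag, norm_sq_euc, Finset.mul_sum]
    exact Finset.sum_le_sum fun j _ => mul_le_mul_of_nonneg_right (humaxge j) (sq_nonneg _)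
  have hS : ∑ i, q i * qf (Matrix.diagonal u) (c i) ≤ umax * (LΩ * γ) := by
    have humax0 : 0 ≤ umax := le_trans (le_of_lt (huj j0)) (humaxge j0)
    calc ∑ i, q i * qf (Matrix.diagonal u) (c i)
        ≤ ∑ i, q i * (umax * ‖c i‖^2) := Finset.sum_le_sum fun i _ =>
          mul_le_mul_of_nonneg_left (hqfUle (c i)) (le_of_lt (hq i))
      _ = umax * ∑ i, q i * ‖c i‖^2 := by rw [Finset.mul_sum]; exact Finset.sum_congr rfl fun i _ => by ring
      _ ≤ umax * (LΩ * γ) := mul_le_mul_of_nonneg_left hKsum humax0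
  -- strong convexity: γ ≥ μF ‖δ‖²
  have hGeq : ⟪gAvg gf wt - gAvg gf wprev, δ⟫ = γ := by
    rw [gAvg, gAvg, ← smul_sub, real_inner_smul_left, ← Finset.sum_sub_distrib, sum_inner, hγ]
  have hγμ : μF * ‖δ‖^2 ≤ γ := by
    have h1 := hsc wprev wt
    have h2 := hsc wt wprev
    have e1 : (wt - wprev : Euc d) = δ := by rw [hδ]
    have e2 : ‖wprev - wt‖ = ‖δ‖ := by rw [← e1, norm_sub_rev]
    have e3 : ⟪gAvg gf wt, wprev - wt⟫ = -⟪gAvg gf wt, δ⟫ := by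
      rw [show (wprev - wt : Euc d) = -δ by rw [hδ]; abel, inner_neg_right]
    have e4 : ⟪gAvg gf wt - gAvg gf wprev, δ⟫ = ⟪gAvg gf wt, δ⟫ - ⟪gAvg gf wprev, δ⟫ :=
      inner_sub_left _ _ _
    rw [e1] at h1
    rw [e2, e3] at h2
    linarith [hGeq, e4, h1, h2]
  -- γ LΩ ≥ μF² ‖δ‖²
  have hGJ : ‖∑ i, q i • c i‖^2 ≤ LΩ * γ :=
    le_trans (jensen_sq Finset.univ q (fun i _ => le_of_lt (hq i)) hqs c) hKsum
  have hGavg : gAvg gf wt - gAvg gf wprev = ∑ i, q i • c i := by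
    rw [gAvg, gAvg, ← smul_sub, ← Finset.sum_sub_distrib, Finset.smul_sum]
    refine Finset.sum_congr rfl fun i _ => ?_
    rw [hc, smul_smul]
    congr 1
    rw [mul_inv, ← mul_assoc, mul_inv_cancel₀ (ne_of_gt (hq i)), one_mul]
  have hγLB : μF^2 * ‖δ‖^2 ≤ LΩ * γ := by
    rcases eq_or_ne ‖δ‖ 0 with hδ0 | hδ0
    · rw [hδ0]
      have : (0:ℝ) ≤ LΩ * γ := mul_nonneg (le_of_lt hLΩpos) hγnn
      nlinarith
    · have hδpos : 0 < ‖δ‖ := lt_of_le_of_ne (norm_nonneg δ) (Ne.symm hδ0)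
      have hcs : γ ≤ ‖∑ i, q i • c i‖ * ‖δ‖ := by
        rw [← hGeq, hGavg]
        exact real_inner_le_norm _ _
      have hμδ : μF * ‖δ‖ ≤ ‖∑ i, q i • c i‖ := by
        have := hγμ
        nlinarith
      have hsq : (μF * ‖δ‖)^2 ≤ ‖∑ i, q i • c i‖^2 :=
        pow_le_pow_left₀ (by positivity) hμδ 2
      nlinarith [hGJ, hsq]
  -- final assembly
  set Q : ℝ := qf (Matrix.diagonal u)⁻¹ δ with hQ
  have hQnn : 0 ≤ Q := by rw [hQ, hqfI]; positivity
  have hQδ : umin * Q ≤ ‖δ‖^2 := by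
    rw [hQ, hUinv, qf_diag, norm_sq_euc, Finset.mul_sum]
    refine Finset.sum_le_sum fun j _ => ?_
    have h1 : umin * (u j)⁻¹ ≤ 1 := by
      rw [← div_eq_mul_inv, div_le_one (huj j)]
      exact huminle j
    nlinarith [sq_nonneg (δ j), h1, huj j]
  have hsumh : ∑ i, q i * hfun i ≤ umax * (LΩ * γ) - 2 * γ := by
    have e1 : ∀ i, q i * hfun i
        = q i * qf (Matrix.diagonal u) (c i) - 2 * (q i * ⟪δ, c i⟫) := by
      intro i; simp only [hhfun]; ring
    have e0 : ∑ i, q i * hfun i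
        = ∑ i, q i * qf (Matrix.diagonal u) (c i) - 2 * ∑ i, q i * ⟪δ, c i⟫ := by
      rw [Finset.sum_congr rfl fun i _ => e1 i, Finset.sum_sub_distrib, ← Finset.mul_sum]
    rw [e0, hsum_ip]
    linarith [hS]
  have hβ : 0 ≤ 2 - umax * LΩ := by
    have := humaxle
    rw [le_div_iff₀ hLΩpos] at this
    linarith
  have hfinal : umax * (LΩ * γ) - 2 * γ ≤ -(μF^2 * umin * (2 / LΩ - umax)) * Q := by
    have h1 : μF^2 * (umin * Q) ≤ LΩ * γ := by
      have h1a : μF^2 * (umin * Q) ≤ μF^2 * ‖δ‖^2 :=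
        mul_le_mul_of_nonneg_left hQδ (sq_nonneg μF)
      linarith [hγLB]
    have h3 : (2 - umax * LΩ) * (μF^2 * (umin * Q)) ≤ (2 - umax * LΩ) * (LΩ * γ) :=
      mul_le_mul_of_nonneg_left h1 hβ
    have h4 : μF^2 * umin * (2 / LΩ - umax) * Q
        = ((2 - umax * LΩ) * (μF^2 * (umin * Q))) / LΩ := by
      field_simp
    have h5 : ((2 - umax * LΩ) * (μF^2 * (umin * Q))) / LΩ
        ≤ ((2 - umax * LΩ) * (LΩ * γ)) / LΩ :=
      (div_le_div_iff_of_pos_right hLΩpos).mpr h3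
    have h6 : ((2 - umax * LΩ) * (LΩ * γ)) / LΩ = (2 - umax * LΩ) * γ := by
      field_simp
    nlinarith [h4, h5, h6]
  calc ∑ ι : Fin b → Fin n, (∏ j, q (ι j)) * qf (Matrix.diagonal u)⁻¹ (wnext ι - wt)
      ≤ ∑ ι : Fin b → Fin n, (∏ k, q (ι k))
          * (Q + (b:ℝ)⁻¹ * ∑ j, hfun (ι j)) := by
        refine Finset.sum_le_sum fun ι _ => ?_
        exact mul_le_mul_of_nonneg_left (hper ι)
          (Finset.prod_nonneg fun k _ => le_of_lt (hq (ι k)))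
    _ = Q + ∑ i, q i * hfun i := hsum1
    _ ≤ Q + (umax * (LΩ * γ) - 2 * γ) := by linarith [hsumh]
    _ ≤ Q + (-(μF^2 * umin * (2 / LΩ - umax)) * Q) := by linarith [hfinal]
    _ = (1 - μF^2 * umin * (2 / LΩ - umax)) * Q := by ring
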